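/- Under the trajectory setup, let ε ≥ 0 and R_max ≥ 0 be given, and let π be a policy satisfying ∑_{τ} q_π(τ) · ∑_{t=1}^{T−1} KL(q_dyn(· | s_t, a_t) ‖ p_dyn(· | s_t, a_t)) ≤ ε, and such that |R_π(τ)| ≤ R_max for every trajectory τ with q_π(τ) > 0 or p_π(τ) > 0. Then |∑_τ q_π(τ) · R_π(τ) − ∑_τ p_π(τ) · R_π(τ)| ≤ 2 · R_max · √(ε / 2). -/

import Mathlib

open Finset

/-- KL divergence between two probability mass functions on a finite type,
with the convention `0 · log 0 = 0` (which holds automatically in `ℝ`). -/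
noncomputable def KL {X : Type*} [Fintype X] (μ ν : PMF X) : ℝ :=
  ∑ x, (μ x).toReal * Real.log ((μ x).toReal / (ν x).toReal)

/-- The index `t` of a trajectory, regarded inside `Fin T`. -/
def idx1 {T : ℕ} (t : Fin (T - 1)) : Fin T := ⟨t.1, by have := t.2; omega⟩

/-- The index `t + 1` of a trajectory, regarded inside `Fin T`. -/
def idx2 {T : ℕ} (t : Fin (T - 1)) : Fin T := ⟨t.1 + 1, by have := t.2; omega⟩

/-- Probability of the trajectory `τ = (s₁, a₁, …, s_T, a_T)` under initial
distribution `p₁`, dynamics `dyn` and policy `π`: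
`p₁(s₁) · ∏_{t=1}^{T} π(a_t|s_t) · ∏_{t=1}^{T−1} dyn(s_{t+1}|s_t,a_t)`. -/
noncomputable def trajProb {S A : Type*} {T : ℕ} (hT : 1 ≤ T)
    (p₁ : PMF S) (dyn : S → A → PMF S) (π : S → PMF A)
    (τ : Fin T → S × A) : ℝ :=
  (p₁ (τ ⟨0, hT⟩).1).toReal
    * (∏ t : Fin T, (π (τ t).1 (τ t).2).toReal)
    * (∏ t : Fin (T - 1), (dyn (τ (idx1 t)).1 (τ (idx1 t)).2 (τ (idx2 t)).1).toReal)

/-- Entropy-regularized return of a trajectory: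
`∑_{t=1}^{T} (r(s_t,a_t) − log π(a_t|s_t))`. -/
noncomputable def entReturn {S A : Type*} {T : ℕ}
    (r : S → A → ℝ) (π : S → PMF A) (τ : Fin T → S × A) : ℝ :=
  ∑ t : Fin T, (r (τ t).1 (τ t).2 - Real.log ((π (τ t).1 (τ t).2)).toReal)

/-- The DARC reward correction `Δr(s,a,s') = log p_dyn(s'|s,a) − log q_dyn(s'|s,a)`. -/
noncomputable def Δr {S A : Type*} (qdyn pdyn : S → A → PMF S)
    (s : S) (a : A) (s' : S) : ℝ :=
  Real.log ((pdyn s a s').toReal) - Real.log ((qdyn s a s').toReal)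

/-- Expected (under the source trajectory distribution) sum of per-step KL
divergences between source and target dynamics. -/
noncomputable def expKL {S A : Type*} [Fintype S] [Fintype A] {T : ℕ}
    (hT : 1 ≤ T) (p₁ : PMF S) (qdyn pdyn : S → A → PMF S) (π : S → PMF A) : ℝ :=
  ∑ τ : Fin T → S × A, trajProb hT p₁ qdyn π τ *
    ∑ t : Fin (T - 1),
      KL (qdyn (τ (idx1 t)).1 (τ (idx1 t)).2) (pdyn (τ (idx1 t)).1 (τ (idx1 t)).2)

open Finset

-- u(x) = (x+1) log x - 2(x-1) is monotone on (0,∞)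
lemma aux_u_mono : MonotoneOn (fun x : ℝ => (x+1) * Real.log x - 2*(x-1)) (Set.Ioi 0) := by
  have hderiv : ∀ x : ℝ, 0 < x →
      HasDerivAt (fun x : ℝ => (x+1) * Real.log x - 2*(x-1))
        (Real.log x + (x+1) * x⁻¹ - 2) x := by
    intro x hx
    have h1 : HasDerivAt (fun x : ℝ => (x+1) * Real.log x)
        (1 * Real.log x + (x+1) * x⁻¹) x :=
      (((hasDerivAt_id x).add_const 1)).mul (Real.hasDerivAt_log hx.ne')
    have h2 : HasDerivAt (fun x : ℝ => 2*(x-1)) 2 x := by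
      simpa using ((hasDerivAt_id x).sub_const 1).const_mul 2
    exact (h1.sub h2).congr_deriv (by ring)
  apply monotoneOn_of_deriv_nonneg (convex_Ioi 0)
  · apply ContinuousOn.sub
    · exact ContinuousOn.mul (by fun_prop) (Real.continuousOn_log.mono (by
        intro x hx; simpa using ne_of_gt hx))
    · fun_prop
  · intro x hx
    rw [interior_Ioi] at hx
    exact (hderiv x hx).differentiableAt.differentiableWithinAt
  · intro x hx
    rw [interior_Ioi] at hx
    rw [(hderiv x hx).deriv]
    have := Real.one_sub_inv_le_log_of_pos hx
    have hx' : (x+1) * x⁻¹ = 1 + x⁻¹ := by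
      rw [add_mul, mul_inv_cancel₀ (ne_of_gt hx), one_mul]
    nlinarith [this]

lemma aux_u_nonneg {x : ℝ} (hx : 1 ≤ x) : 0 ≤ (x+1) * Real.log x - 2*(x-1) := by
  have := aux_u_mono (Set.mem_Ioi.2 one_pos) (Set.mem_Ioi.2 (lt_of_lt_of_le one_pos hx)) hx
  simpa using this

lemma aux_u_nonpos {x : ℝ} (hx0 : 0 < x) (hx : x ≤ 1) :
    (x+1) * Real.log x - 2*(x-1) ≤ 0 := by
  have := aux_u_mono (Set.mem_Ioi.2 hx0) (Set.mem_Ioi.2 one_pos) hx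
  simpa using this

-- key inequality: for x ≥ 0, 3(x-1)^2 ≤ (2x+4)(x log x - x + 1)
lemma key_ineq {x : ℝ} (hx : 0 ≤ x) :
    3*(x-1)^2 ≤ (2*x+4) * (x * Real.log x - x + 1) := by
  set g : ℝ → ℝ := fun x => (2*x+4) * (x * Real.log x - x + 1) - 3*(x-1)^2 with hg
  have hderiv : ∀ y : ℝ, 0 < y →
      HasDerivAt g (4*((y+1) * Real.log y - 2*(y-1))) y := by
    intro y hy
    have h1 : HasDerivAt (fun x : ℝ => x * Real.log x) (Real.log y + 1) y :=
      Real.hasDerivAt_mul_log hy.ne'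
    have h2 : HasDerivAt (fun x : ℝ => x * Real.log x - x + 1) (Real.log y + 1 - 1) y :=
      (h1.sub (hasDerivAt_id y)).add_const 1
    have h3 : HasDerivAt (fun x : ℝ => 2*x+4) 2 y := by
      simpa using ((hasDerivAt_id y).const_mul 2).add_const 4
    have h4 : HasDerivAt g ((2*(y * Real.log y - y + 1) + (2*y+4)*(Real.log y + 1 - 1))
        - 3*(2*(y-1))) y := by
      refine HasDerivAt.sub (h3.mul h2) ?_
      have : HasDerivAt (fun x : ℝ => (x-1)^2) (2*(y-1)) y := by
        exact (((hasDerivAt_id y).sub_const 1).pow 2).congr_deriv (by simp)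
      simpa [mul_comm] using this.const_mul 3
    convert h4 using 1
    ring
  have hcont : Continuous g := by
    apply Continuous.sub
    · exact (continuous_const.mul continuous_id |>.add continuous_const).mul
        ((Real.continuous_mul_log.sub continuous_id).add continuous_const)
    · fun_prop
  have hg1 : g 1 = 0 := by simp [hg]
  rcases le_or_gt 1 x with h1 | h1
  · -- monotone on [1,∞)
    have hmono : MonotoneOn g (Set.Ici 1) := by
      apply monotoneOn_of_deriv_nonneg (convex_Ici 1) hcont.continuousOn
      · intro y hy
        rw [interior_Ici] at hy
        exact (hderiv y (lt_trans one_pos hy)).differentiableAt.differentiableWithinAt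
      · intro y hy
        rw [interior_Ici] at hy
        rw [(hderiv y (lt_trans one_pos hy)).deriv]
        have := aux_u_nonneg hy.le
        linarith
    have := hmono (Set.mem_Ici.2 le_rfl) (Set.mem_Ici.2 h1) h1
    rw [hg1] at this
    simpa [hg] using this
  · -- antitone on [0,1]
    have hanti : AntitoneOn g (Set.Icc 0 1) := by
      apply antitoneOn_of_deriv_nonpos (convex_Icc 0 1) hcont.continuousOn
      · intro y hy
        rw [interior_Icc] at hy
        exact (hderiv y hy.1).differentiableAt.differentiableWithinAt
      · intro y hy
        rw [interior_Icc] at hy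
        rw [(hderiv y hy.1).deriv]
        have := aux_u_nonpos hy.1 hy.2.le
        linarith
    have := hanti (Set.mem_Icc.2 ⟨hx, h1.le⟩) (Set.mem_Icc.2 ⟨zero_le_one, le_rfl⟩) h1.le
    rw [hg1] at this
    simpa [hg] using this


-- pointwise Pinsker bound
lemma point_bound {a b : ℝ} (ha : 0 ≤ a) (hb : 0 ≤ b) (hab : b = 0 → a = 0) :
    3*(a-b)^2 / (2*a+4*b) ≤ a * Real.log (a/b) - a + b := by
  rcases eq_or_lt_of_le hb with hb0 | hb0
  · have ha0 : a = 0 := hab hb0.symm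
    simp [ha0, ← hb0]
  · have key := key_ineq (x := a/b) (div_nonneg ha hb0.le)
    have hb' : b ≠ 0 := hb0.ne'
    have hden : 0 < 2*a+4*b := by linarith
    rw [div_le_iff₀ hden]
    have e1 : 3*(a-b)^2 = b^2 * (3*(a/b-1)^2) := by
      field_simp
      try ring
    have e2 : (a*Real.log (a/b)-a+b) * (2*a+4*b)
        = b^2 * ((2*(a/b)+4)*((a/b)*Real.log (a/b) - a/b + 1)) := by
      field_simp
      try ring
    rw [e1, e2]
    exact mul_le_mul_of_nonneg_left key (sq_nonneg b)

-- finite Pinsker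
lemma pinsker {ι : Type*} [Fintype ι] (w v : ι → ℝ) (hw : ∀ i, 0 ≤ w i) (hv : ∀ i, 0 ≤ v i)
    (hsw : ∑ i, w i = 1) (hsv : ∑ i, v i = 1) (hzero : ∀ i, w i = 0 ↔ v i = 0) :
    (∑ i, |w i - v i|)^2 ≤ 2 * ∑ i, w i * Real.log (w i / v i) := by
  have hCS := sum_sq_le_sum_mul_sum_of_sq_eq_mul (Finset.univ (α := ι))
    (r := fun i => |w i - v i|)
    (f := fun i => 3*(w i - v i)^2 / (2*w i + 4*v i))
    (g := fun i => (2*w i + 4*v i)/3)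
    (fun i _ => by have := hw i; have := hv i; positivity)
    (fun i _ => by have := hw i; have := hv i; positivity)
    (fun i _ => by
      rcases eq_or_lt_of_le (by have := hw i; have := hv i; positivity :
          (0:ℝ) ≤ 2*w i + 4*v i) with h | h
      · have hwi : w i = 0 := by nlinarith [hw i, hv i]
        have hvi : v i = 0 := by nlinarith [hw i, hv i]
        simp [hwi, hvi, ← h]
      · rw [sq_abs]
        field_simp
        rw [mul_div_cancel_right₀ _ (ne_of_gt (by linarith : (0:ℝ) < w i * 2 + v i * 4))])
  have hf_le : ∑ i, 3*(w i - v i)^2 / (2*w i + 4*v i)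
      ≤ ∑ i, (w i * Real.log (w i / v i) - w i + v i) := by
    apply Finset.sum_le_sum
    intro i _
    exact point_bound (hw i) (hv i) ((hzero i).mpr)
  have hsum1 : ∑ i, (w i * Real.log (w i / v i) - w i + v i)
      = ∑ i, w i * Real.log (w i / v i) := by
    rw [Finset.sum_add_distrib, Finset.sum_sub_distrib, hsw, hsv]; ring
  have hg_sum : ∑ i, (2*w i + 4*v i)/3 = 2 := by
    rw [← Finset.sum_div, Finset.sum_add_distrib, ← Finset.mul_sum, ← Finset.mul_sum,
      hsw, hsv]
    norm_num
  rw [hsum1] at hf_le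
  calc (∑ i, |w i - v i|)^2 ≤ (∑ i, 3*(w i - v i)^2 / (2*w i + 4*v i)) * ∑ i, (2*w i + 4*v i)/3 := hCS
    _ ≤ (∑ i, w i * Real.log (w i / v i)) * 2 := by
        rw [hg_sum]
        apply mul_le_mul_of_nonneg_right hf_le (by norm_num)
    _ = 2 * ∑ i, w i * Real.log (w i / v i) := by ring

lemma pmf_toReal_pos {X : Type*} {p : PMF X} {x : X} (h : p x ≠ 0) : 0 < (p x).toReal :=
  ENNReal.toReal_pos h (p.apply_ne_top x)

lemma pmf_toReal_ne_zero {X : Type*} {p : PMF X} {x : X} (h : (p x).toReal ≠ 0) : p x ≠ 0 :=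
  fun h0 => h (by simp [h0])

lemma sum_pmf_toReal {X : Type*} [Fintype X] (p : PMF X) : ∑ x, (p x).toReal = 1 := by
  rw [← ENNReal.toReal_sum (fun a _ => p.apply_ne_top a)]
  rw [show ∑ x, p x = 1 from by rw [← tsum_fintype (L := .unconditional _)]; exact p.tsum_coe]
  simp

lemma cons_mk_zero {α : Type*} {n : ℕ} (x : α) (τ : Fin n → α) (h : 0 < n + 1) :
    Fin.cons (α := fun _ => α) x τ ⟨0, h⟩ = x := rfl

lemma cons_mk_succ {α : Type*} {n : ℕ} (x : α) (τ : Fin n → α) (j : ℕ) (h : j + 1 < n + 1) :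
    Fin.cons (α := fun _ => α) x τ ⟨j+1, h⟩ = τ ⟨j, Nat.lt_of_succ_lt_succ h⟩ :=
  by have := Fin.cons_succ (α := fun _ => α) x τ ⟨j, Nat.lt_of_succ_lt_succ h⟩
     simpa [Fin.succ] using this

lemma cons_mk_one {α : Type*} {n : ℕ} (x : α) (τ : Fin (n+1) → α) (h : 1 < n + 2) :
    Fin.cons (α := fun _ => α) x τ ⟨1, h⟩ = τ ⟨0, Nat.succ_pos n⟩ :=
  by have := Fin.cons_succ (α := fun _ => α) x τ ⟨0, Nat.succ_pos n⟩
     simpa [Fin.succ] using this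

lemma sum_cons_eq {β : Type*} [Fintype β] {n : ℕ} (f : (Fin (n+1) → β) → ℝ) :
    ∑ τ : Fin (n+1) → β, f τ = ∑ x : β, ∑ τ₀ : Fin n → β, f (Fin.cons x τ₀) := by
  rw [← (Fin.consEquiv (fun _ : Fin (n+1) => β)).sum_comp f, Fintype.sum_prod_type]
  rfl

lemma trajProb_cons {S A : Type*} {m : ℕ} (h2 : 1 ≤ m + 2) (h1 : 1 ≤ m + 1)
    (p₁ : PMF S) (dyn : S → A → PMF S) (π : S → PMF A)
    (x : S × A) (τ₀ : Fin (m+1) → S × A) :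
    trajProb h2 p₁ dyn π (Fin.cons x τ₀)
      = (p₁ x.1).toReal * (π x.1 x.2).toReal
        * trajProb h1 (dyn x.1 x.2) dyn π τ₀ := by
  unfold trajProb
  show (p₁ x.1).toReal
      * (∏ t : Fin (m+2),
          (π ((Fin.cons x τ₀ : Fin (m+2) → S × A) t).1
            ((Fin.cons x τ₀ : Fin (m+2) → S × A) t).2).toReal)
      * (∏ t : Fin (m+1),
          (dyn ((Fin.cons x τ₀ : Fin (m+2) → S × A) ⟨t.1, Nat.lt_succ_of_lt t.isLt⟩).1
            ((Fin.cons x τ₀ : Fin (m+2) → S × A) ⟨t.1, Nat.lt_succ_of_lt t.isLt⟩).2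
            ((Fin.cons x τ₀ : Fin (m+2) → S × A) ⟨t.1+1, Nat.succ_lt_succ t.isLt⟩).1).toReal)
    = (p₁ x.1).toReal * (π x.1 x.2).toReal
      * ((dyn x.1 x.2 (τ₀ ⟨0, h1⟩).1).toReal
        * (∏ t : Fin (m+1), (π (τ₀ t).1 (τ₀ t).2).toReal)
        * (∏ t : Fin m,
            (dyn (τ₀ ⟨t.1, Nat.lt_succ_of_lt t.isLt⟩).1 (τ₀ ⟨t.1, Nat.lt_succ_of_lt t.isLt⟩).2
              (τ₀ ⟨t.1+1, Nat.succ_lt_succ t.isLt⟩).1).toReal))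
  rw [Fin.prod_univ_succ (f := fun t : Fin (m+2) =>
    (π ((Fin.cons x τ₀ : Fin (m+2) → S × A) t).1
      ((Fin.cons x τ₀ : Fin (m+2) → S × A) t).2).toReal)]
  rw [Fin.prod_univ_succ (f := fun t : Fin (m+1) =>
    (dyn ((Fin.cons x τ₀ : Fin (m+2) → S × A) ⟨t.1, Nat.lt_succ_of_lt t.isLt⟩).1
      ((Fin.cons x τ₀ : Fin (m+2) → S × A) ⟨t.1, Nat.lt_succ_of_lt t.isLt⟩).2
      ((Fin.cons x τ₀ : Fin (m+2) → S × A) ⟨t.1+1, Nat.succ_lt_succ t.isLt⟩).1).toReal)]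
  simp only [Fin.cons_zero, Fin.cons_succ, Fin.val_succ, Fin.val_zero, cons_mk_zero,
    cons_mk_succ, cons_mk_one, Fin.zero_eta, Fin.mk_zero]
  ring

lemma trajProb_one {S A : Type*} (hT : (1:ℕ) ≤ 1) (p₁ : PMF S) (dyn : S → A → PMF S)
    (π : S → PMF A) (τ : Fin 1 → S × A) :
    trajProb hT p₁ dyn π τ = (p₁ (τ 0).1).toReal * (π (τ 0).1 (τ 0).2).toReal := by
  unfold trajProb
  show (p₁ (τ 0).1).toReal * (∏ t : Fin 1, (π (τ t).1 (τ t).2).toReal)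
      * (∏ t : Fin 0, (dyn (τ 0).1 (τ 0).2 (τ 0).1).toReal) = _
  simp

lemma sum_fin_one {β : Type*} [Fintype β] (f : (Fin 1 → β) → ℝ) :
    ∑ τ : Fin 1 → β, f τ = ∑ y : β, f (fun _ => y) := by
  rw [← (Equiv.funUnique (Fin 1) β).symm.sum_comp f]
  rfl

lemma prod_sum_one {S A : Type*} [Fintype S] [Fintype A] (μ : PMF S) (π : S → PMF A) :
    ∑ x : S × A, (μ x.1).toReal * (π x.1 x.2).toReal = 1 := by
  rw [Fintype.sum_prod_type]
  have : ∀ s : S, ∑ a : A, (μ s).toReal * (π s a).toReal = (μ s).toReal := by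
    intro s
    rw [← Finset.mul_sum, sum_pmf_toReal, mul_one]
  rw [Finset.sum_congr rfl (fun s _ => this s), sum_pmf_toReal]

lemma trajProb_sum_one {S A : Type*} [Fintype S] [Fintype A] (π : S → PMF A)
    (dyn : S → A → PMF S) :
    ∀ (m : ℕ) (hT : 1 ≤ m + 1) (p₁ : PMF S),
      ∑ τ : Fin (m+1) → S × A, trajProb hT p₁ dyn π τ = 1 := by
  intro m
  induction m with
  | zero =>
    intro hT p₁
    rw [sum_fin_one]
    have : ∀ y : S × A, trajProb hT p₁ dyn π (fun _ => y)
        = (p₁ y.1).toReal * (π y.1 y.2).toReal := fun y => trajProb_one hT p₁ dyn π _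
    rw [Finset.sum_congr rfl (fun y _ => this y)]
    exact prod_sum_one p₁ π
  | succ n ih =>
    intro hT p₁
    rw [sum_cons_eq]
    have : ∀ x : S × A, ∑ τ₀ : Fin (n+1) → S × A, trajProb hT p₁ dyn π (Fin.cons x τ₀)
        = (p₁ x.1).toReal * (π x.1 x.2).toReal := by
      intro x
      have h1 : (1:ℕ) ≤ n + 1 := Nat.succ_le_succ (Nat.zero_le n)
      calc ∑ τ₀ : Fin (n+1) → S × A, trajProb hT p₁ dyn π (Fin.cons x τ₀)
          = ∑ τ₀ : Fin (n+1) → S × A, (p₁ x.1).toReal * (π x.1 x.2).toReal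
              * trajProb h1 (dyn x.1 x.2) dyn π τ₀ := by
            exact Finset.sum_congr rfl (fun τ₀ _ => trajProb_cons hT h1 p₁ dyn π x τ₀)
        _ = (p₁ x.1).toReal * (π x.1 x.2).toReal := by
            rw [← Finset.mul_sum, ih h1 (dyn x.1 x.2), mul_one]
    rw [Finset.sum_congr rfl (fun x _ => this x)]
    exact prod_sum_one p₁ π

lemma trajProb_nonneg {S A : Type*} {T : ℕ} (hT : 1 ≤ T) (p₁ : PMF S)
    (dyn : S → A → PMF S) (π : S → PMF A) (τ : Fin T → S × A) :
    0 ≤ trajProb hT p₁ dyn π τ := by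
  unfold trajProb
  positivity

lemma trajProb_pos_transfer {S A : Type*} {T : ℕ} (hT : 1 ≤ T) {μ ν : PMF S}
    {qdyn pdyn : S → A → PMF S} (hp : ∀ s a s', 0 < pdyn s a s')
    (hν : ∀ s, μ s ≠ 0 → ν s ≠ 0) (π : S → PMF A) (τ : Fin T → S × A)
    (h : trajProb hT μ qdyn π τ ≠ 0) : 0 < trajProb hT ν pdyn π τ := by
  unfold trajProb at h ⊢
  have h1 : (μ (τ ⟨0, hT⟩).1).toReal ≠ 0 := by
    intro h0; apply h; rw [h0]; ring
  have h2 : (∏ t : Fin T, (π (τ t).1 (τ t).2).toReal) ≠ 0 := by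
    intro h0; apply h; rw [h0]; ring
  have g1 : 0 < (ν (τ ⟨0, hT⟩).1).toReal :=
    pmf_toReal_pos (hν _ (pmf_toReal_ne_zero h1))
  have g2 : 0 < ∏ t : Fin T, (π (τ t).1 (τ t).2).toReal := by
    rw [Finset.prod_ne_zero_iff] at h2
    exact Finset.prod_pos (fun t _ => lt_of_le_of_ne ENNReal.toReal_nonneg (Ne.symm (h2 t (Finset.mem_univ t))))
  have g3 : 0 < ∏ t : Fin (T-1), (pdyn (τ (idx1 t)).1 (τ (idx1 t)).2 (τ (idx2 t)).1).toReal :=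
    Finset.prod_pos (fun t _ => pmf_toReal_pos (hp _ _ _).ne')
  positivity

lemma KL_expand {S A : Type*} [Fintype S] [Fintype A] (μ ν : PMF S) (π : S → PMF A) :
    KL μ ν = ∑ x : S × A, (μ x.1).toReal * (π x.1 x.2).toReal
      * Real.log ((μ x.1).toReal / (ν x.1).toReal) := by
  rw [Fintype.sum_prod_type]
  unfold KL
  apply Finset.sum_congr rfl
  intro s _
  have : ∑ a : A, (μ s).toReal * (π s a).toReal * Real.log ((μ s).toReal / (ν s).toReal)
      = ((μ s).toReal * Real.log ((μ s).toReal / (ν s).toReal)) * ∑ a : A, (π s a).toReal := by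
    rw [Finset.mul_sum]
    exact Finset.sum_congr rfl (fun a _ => by ring)
  rw [this, sum_pmf_toReal, mul_one]

lemma expKL_one {S A : Type*} [Fintype S] [Fintype A] (hT : (1:ℕ) ≤ 1)
    (μ : PMF S) (qdyn pdyn : S → A → PMF S) (π : S → PMF A) :
    expKL hT μ qdyn pdyn π = 0 := by
  unfold expKL
  apply Finset.sum_eq_zero
  intro τ _
  have hempty : ∀ t : Fin (1-1), False := fun t => by have := t.2; omega
  rw [Finset.sum_eq_zero (fun t _ => (hempty t).elim), mul_zero]

lemma klsum_cons {S A : Type*} [Fintype S] (qdyn pdyn : S → A → PMF S) {n : ℕ}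
    (x : S × A) (τ₀ : Fin (n+1) → S × A) :
    (∑ t : Fin (n+2-1), KL
        (qdyn ((Fin.cons x τ₀ : Fin (n+2) → S × A) (idx1 t)).1
          ((Fin.cons x τ₀ : Fin (n+2) → S × A) (idx1 t)).2)
        (pdyn ((Fin.cons x τ₀ : Fin (n+2) → S × A) (idx1 t)).1
          ((Fin.cons x τ₀ : Fin (n+2) → S × A) (idx1 t)).2))
    = KL (qdyn x.1 x.2) (pdyn x.1 x.2)
      + ∑ t : Fin (n+1-1), KL (qdyn (τ₀ (idx1 t)).1 (τ₀ (idx1 t)).2)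
          (pdyn (τ₀ (idx1 t)).1 (τ₀ (idx1 t)).2) := by
  show (∑ t : Fin (n+1), KL
      (qdyn ((Fin.cons x τ₀ : Fin (n+2) → S × A) ⟨t.1, Nat.lt_succ_of_lt t.isLt⟩).1
        ((Fin.cons x τ₀ : Fin (n+2) → S × A) ⟨t.1, Nat.lt_succ_of_lt t.isLt⟩).2)
      (pdyn ((Fin.cons x τ₀ : Fin (n+2) → S × A) ⟨t.1, Nat.lt_succ_of_lt t.isLt⟩).1
        ((Fin.cons x τ₀ : Fin (n+2) → S × A) ⟨t.1, Nat.lt_succ_of_lt t.isLt⟩).2))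
    = KL (qdyn x.1 x.2) (pdyn x.1 x.2)
      + ∑ t : Fin n, KL (qdyn (τ₀ ⟨t.1, Nat.lt_succ_of_lt t.isLt⟩).1
          (τ₀ ⟨t.1, Nat.lt_succ_of_lt t.isLt⟩).2)
        (pdyn (τ₀ ⟨t.1, Nat.lt_succ_of_lt t.isLt⟩).1
          (τ₀ ⟨t.1, Nat.lt_succ_of_lt t.isLt⟩).2)
  rw [Fin.sum_univ_succ (f := fun t : Fin (n+1) => KL
      (qdyn ((Fin.cons x τ₀ : Fin (n+2) → S × A) ⟨t.1, Nat.lt_succ_of_lt t.isLt⟩).1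
        ((Fin.cons x τ₀ : Fin (n+2) → S × A) ⟨t.1, Nat.lt_succ_of_lt t.isLt⟩).2)
      (pdyn ((Fin.cons x τ₀ : Fin (n+2) → S × A) ⟨t.1, Nat.lt_succ_of_lt t.isLt⟩).1
        ((Fin.cons x τ₀ : Fin (n+2) → S × A) ⟨t.1, Nat.lt_succ_of_lt t.isLt⟩).2))]
  simp only [Fin.val_succ, Fin.val_zero, cons_mk_zero, cons_mk_succ, cons_mk_one,
    Fin.zero_eta, Fin.mk_zero, Fin.cons_zero]

lemma expKL_cons {S A : Type*} [Fintype S] [Fintype A] {n : ℕ} (hT : 1 ≤ n+2) (h1 : 1 ≤ n+1)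
    (μ : PMF S) (qdyn pdyn : S → A → PMF S) (π : S → PMF A) :
    expKL hT μ qdyn pdyn π
      = ∑ x : S × A, (μ x.1).toReal * (π x.1 x.2).toReal *
          (KL (qdyn x.1 x.2) (pdyn x.1 x.2) + expKL h1 (qdyn x.1 x.2) qdyn pdyn π) := by
  unfold expKL
  rw [sum_cons_eq]
  apply Finset.sum_congr rfl
  intro x _
  have step : ∀ τ₀ : Fin (n+1) → S × A,
      trajProb hT μ qdyn π (Fin.cons x τ₀) *
        ∑ t : Fin (n+2-1), KL
          (qdyn ((Fin.cons x τ₀ : Fin (n+2) → S × A) (idx1 t)).1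
            ((Fin.cons x τ₀ : Fin (n+2) → S × A) (idx1 t)).2)
          (pdyn ((Fin.cons x τ₀ : Fin (n+2) → S × A) (idx1 t)).1
            ((Fin.cons x τ₀ : Fin (n+2) → S × A) (idx1 t)).2)
      = (μ x.1).toReal * (π x.1 x.2).toReal *
          (trajProb h1 (qdyn x.1 x.2) qdyn π τ₀ *
            (KL (qdyn x.1 x.2) (pdyn x.1 x.2)
              + ∑ t : Fin (n+1-1), KL (qdyn (τ₀ (idx1 t)).1 (τ₀ (idx1 t)).2)
                  (pdyn (τ₀ (idx1 t)).1 (τ₀ (idx1 t)).2))) := by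
    intro τ₀
    rw [trajProb_cons hT h1 μ qdyn π x τ₀, klsum_cons qdyn pdyn x τ₀]
    ring
  rw [Finset.sum_congr rfl (fun τ₀ _ => step τ₀), ← Finset.mul_sum]
  congr 1
  have expand : ∀ τ₀ : Fin (n+1) → S × A,
      trajProb h1 (qdyn x.1 x.2) qdyn π τ₀ *
        (KL (qdyn x.1 x.2) (pdyn x.1 x.2)
          + ∑ t : Fin (n+1-1), KL (qdyn (τ₀ (idx1 t)).1 (τ₀ (idx1 t)).2)
              (pdyn (τ₀ (idx1 t)).1 (τ₀ (idx1 t)).2))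
      = trajProb h1 (qdyn x.1 x.2) qdyn π τ₀ * KL (qdyn x.1 x.2) (pdyn x.1 x.2)
        + trajProb h1 (qdyn x.1 x.2) qdyn π τ₀ *
            ∑ t : Fin (n+1-1), KL (qdyn (τ₀ (idx1 t)).1 (τ₀ (idx1 t)).2)
              (pdyn (τ₀ (idx1 t)).1 (τ₀ (idx1 t)).2) := fun τ₀ => by ring
  rw [Finset.sum_congr rfl (fun τ₀ _ => expand τ₀), Finset.sum_add_distrib,
    ← Finset.sum_mul, trajProb_sum_one π qdyn n h1 (qdyn x.1 x.2), one_mul]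

lemma chain_rule {S A : Type*} [Fintype S] [Fintype A]
    (qdyn pdyn : S → A → PMF S) (hq : ∀ s a s', qdyn s a s' ≠ 0) (hp : ∀ s a s', 0 < pdyn s a s')
    (π : S → PMF A) :
    ∀ (m : ℕ) (hT : 1 ≤ m + 1) (μ ν : PMF S), (∀ s, μ s ≠ 0 → ν s ≠ 0) →
    ∑ τ : Fin (m+1) → S × A, trajProb hT μ qdyn π τ *
        Real.log (trajProb hT μ qdyn π τ / trajProb hT ν pdyn π τ)
      = KL μ ν + expKL hT μ qdyn pdyn π := by
  intro m
  induction m with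
  | zero =>
    intro hT μ ν hν
    rw [sum_fin_one, expKL_one hT μ qdyn pdyn π, add_zero, KL_expand μ ν π]
    apply Finset.sum_congr rfl
    intro y _
    rw [trajProb_one hT μ qdyn π, trajProb_one hT ν pdyn π]
    show (μ y.1).toReal * (π y.1 y.2).toReal *
        Real.log (((μ y.1).toReal * (π y.1 y.2).toReal) / ((ν y.1).toReal * (π y.1 y.2).toReal))
      = _
    by_cases h : (μ y.1).toReal * (π y.1 y.2).toReal = 0
    · rw [h, zero_mul, zero_mul]
    · have hμ : (μ y.1).toReal ≠ 0 := fun h0 => h (by rw [h0, zero_mul])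
      have hπ : (π y.1 y.2).toReal ≠ 0 := fun h0 => h (by rw [h0, mul_zero])
      rw [mul_div_mul_right _ _ hπ]
  | succ n ih =>
    intro hT μ ν hν
    have h1 : (1:ℕ) ≤ n + 1 := Nat.succ_le_succ (Nat.zero_le n)
    rw [sum_cons_eq, KL_expand μ ν π, expKL_cons hT h1 μ qdyn pdyn π,
      ← Finset.sum_add_distrib]
    apply Finset.sum_congr rfl
    intro x _
    have hqx : ∀ s', qdyn x.1 x.2 s' ≠ 0 → pdyn x.1 x.2 s' ≠ 0 := fun s' _ => (hp _ _ _).ne'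
    have key : ∀ τ₀ : Fin (n+1) → S × A,
        trajProb hT μ qdyn π (Fin.cons x τ₀) *
          Real.log (trajProb hT μ qdyn π (Fin.cons x τ₀) / trajProb hT ν pdyn π (Fin.cons x τ₀))
        = (μ x.1).toReal * (π x.1 x.2).toReal *
            (trajProb h1 (qdyn x.1 x.2) qdyn π τ₀ *
                Real.log ((μ x.1).toReal / (ν x.1).toReal)
              + trajProb h1 (qdyn x.1 x.2) qdyn π τ₀ *
                  Real.log (trajProb h1 (qdyn x.1 x.2) qdyn π τ₀ /
                    trajProb h1 (pdyn x.1 x.2) pdyn π τ₀)) := by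
      intro τ₀
      rw [trajProb_cons hT h1 μ qdyn π x τ₀, trajProb_cons hT h1 ν pdyn π x τ₀]
      set a := (μ x.1).toReal with ha
      set b := (ν x.1).toReal with hb
      set c := (π x.1 x.2).toReal with hc
      set Q := trajProb h1 (qdyn x.1 x.2) qdyn π τ₀ with hQ
      set P := trajProb h1 (pdyn x.1 x.2) pdyn π τ₀ with hP
      by_cases h : a * c * Q = 0
      · rw [h, zero_mul]
        have : a * c * (Q * Real.log (a/b) + Q * Real.log (Q/P))
            = (a * c * Q) * (Real.log (a/b) + Real.log (Q/P)) := by ring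
        rw [this, h, zero_mul]
      · have haz : a ≠ 0 := fun h0 => h (by rw [h0, zero_mul, zero_mul])
        have hcz : c ≠ 0 := fun h0 => h (by rw [h0, mul_zero, zero_mul])
        have hQz : Q ≠ 0 := fun h0 => h (by rw [h0, mul_zero])
        have hbz : b ≠ 0 :=
          (pmf_toReal_pos (hν x.1 (pmf_toReal_ne_zero haz))).ne'
        have hPz : P ≠ 0 := (trajProb_pos_transfer h1 hp hqx π τ₀ hQz).ne'
        have hratio : (a * c * Q) / (b * c * P) = (a/b) * (Q/P) := by
          field_simp
        rw [hratio, Real.log_mul (div_ne_zero haz hbz) (div_ne_zero hQz hPz)]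
        ring
    rw [Finset.sum_congr rfl (fun τ₀ _ => key τ₀), ← Finset.mul_sum, Finset.sum_add_distrib,
      ← Finset.sum_mul, trajProb_sum_one π qdyn n h1 (qdyn x.1 x.2), one_mul,
      ih h1 (qdyn x.1 x.2) (pdyn x.1 x.2) hqx]
    ring

lemma KL_self {X : Type*} [Fintype X] (μ : PMF X) : KL μ μ = 0 := by
  apply Finset.sum_eq_zero
  intro x _
  by_cases h : (μ x).toReal = 0
  · rw [h, zero_mul]
  · rw [div_self h, Real.log_one, mul_zero]

lemma sqrt_two_eps (ε : ℝ) (hε : 0 ≤ ε) : Real.sqrt (2*ε) = 2 * Real.sqrt (ε/2) := by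
  rw [show 2*ε = 2^2 * (ε/2) from by ring, Real.sqrt_mul (by positivity) (ε/2),
    Real.sqrt_sq (by norm_num)]


/-- Lemma B.2 of "Off-Dynamics Reinforcement Learning": a policy whose expected
per-step dynamics KL is at most `ε` attains similar entropy-regularized returns
in the source and target domains. -/
theorem source_target_return_close {S A : Type*} [Fintype S] [Fintype A]
    [Nonempty S] [Nonempty A] {T : ℕ} (hT : 1 ≤ T)
    (p₁ : PMF S) (qdyn pdyn : S → A → PMF S)
    (hq : ∀ s a s', 0 < qdyn s a s') (hp : ∀ s a s', 0 < pdyn s a s')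
    (r : S → A → ℝ) (π : S → PMF A)
    (ε Rmax : ℝ) (hε : 0 ≤ ε) (hR : 0 ≤ Rmax)
    (hKL : expKL hT p₁ qdyn pdyn π ≤ ε)
    (hbound : ∀ τ : Fin T → S × A,
      (0 < trajProb hT p₁ qdyn π τ ∨ 0 < trajProb hT p₁ pdyn π τ) →
      |entReturn r π τ| ≤ Rmax) :
    |(∑ τ : Fin T → S × A, trajProb hT p₁ qdyn π τ * entReturn r π τ)
        - ∑ τ : Fin T → S × A, trajProb hT p₁ pdyn π τ * entReturn r π τ|
      ≤ 2 * Rmax * Real.sqrt (ε / 2) := by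
  obtain ⟨m, rfl⟩ : ∃ m, T = m + 1 := ⟨T - 1, by omega⟩
  set q : (Fin (m+1) → S × A) → ℝ := fun τ => trajProb hT p₁ qdyn π τ with hq'
  set p : (Fin (m+1) → S × A) → ℝ := fun τ => trajProb hT p₁ pdyn π τ with hp'
  have hq0 : ∀ τ, 0 ≤ q τ := fun τ => trajProb_nonneg hT p₁ qdyn π τ
  have hp0 : ∀ τ, 0 ≤ p τ := fun τ => trajProb_nonneg hT p₁ pdyn π τ
  have htriv : ∀ s : S, p₁ s ≠ 0 → p₁ s ≠ 0 := fun s h => h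
  have hzero : ∀ τ, q τ = 0 ↔ p τ = 0 := by
    intro τ
    constructor
    · intro h
      by_contra h0
      exact ((trajProb_pos_transfer hT (fun s a s' => hq s a s') htriv π τ h0).ne' h).elim
    · intro h
      by_contra h0
      exact ((trajProb_pos_transfer hT (fun s a s' => hp s a s') htriv π τ h0).ne' h).elim
  -- step 1 : difference bounded by Rmax * total variation
  have step1 : |(∑ τ, q τ * entReturn r π τ) - ∑ τ, p τ * entReturn r π τ|
      ≤ Rmax * ∑ τ, |q τ - p τ| := by
    rw [← Finset.sum_sub_distrib]
    refine (Finset.abs_sum_le_sum_abs _ _).trans ?_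
    rw [Finset.mul_sum]
    apply Finset.sum_le_sum
    intro τ _
    by_cases h : q τ = p τ
    · rw [show q τ * entReturn r π τ - p τ * entReturn r π τ = 0 from by rw [h]; ring,
        show q τ - p τ = 0 from by rw [h]; ring]
      simp
    · have hor : 0 < q τ ∨ 0 < p τ := by
        rcases eq_or_lt_of_le (hq0 τ) with h1 | h1
        · rcases eq_or_lt_of_le (hp0 τ) with h2 | h2
          · exact (h (h1.symm.trans h2)).elim
          · exact Or.inr h2
        · exact Or.inl h1
      have hb := hbound τ hor
      calc |q τ * entReturn r π τ - p τ * entReturn r π τ|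
          = |q τ - p τ| * |entReturn r π τ| := by
            rw [← abs_mul]; congr 1; ring
        _ ≤ |q τ - p τ| * Rmax := mul_le_mul_of_nonneg_left hb (abs_nonneg _)
        _ = Rmax * |q τ - p τ| := mul_comm _ _
  -- step 2 : Pinsker + chain rule
  have hsumq : ∑ τ, q τ = 1 := trajProb_sum_one π qdyn m hT p₁
  have hsump : ∑ τ, p τ = 1 := trajProb_sum_one π pdyn m hT p₁
  have hpin := pinsker q p hq0 hp0 hsumq hsump hzero
  have hchain := chain_rule qdyn pdyn (fun s a s' => (hq s a s').ne') hp π m hT p₁ p₁ htriv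
  rw [KL_self, zero_add] at hchain
  have hKL2 : ∑ τ, q τ * Real.log (q τ / p τ) ≤ ε := by
    rw [hchain]; exact hKL
  have step2 : ∑ τ, |q τ - p τ| ≤ Real.sqrt (2*ε) := by
    have h1 : (∑ τ, |q τ - p τ|)^2 ≤ 2*ε := hpin.trans (by linarith)
    have h2 : 0 ≤ ∑ τ, |q τ - p τ| := Finset.sum_nonneg (fun τ _ => abs_nonneg _)
    calc ∑ τ, |q τ - p τ| = Real.sqrt ((∑ τ, |q τ - p τ|)^2) := (Real.sqrt_sq h2).symm
      _ ≤ Real.sqrt (2*ε) := Real.sqrt_le_sqrt h1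
  calc |(∑ τ, q τ * entReturn r π τ) - ∑ τ, p τ * entReturn r π τ|
      ≤ Rmax * ∑ τ, |q τ - p τ| := step1
    _ ≤ Rmax * Real.sqrt (2*ε) := mul_le_mul_of_nonneg_left step2 hR
    _ = 2 * Rmax * Real.sqrt (ε/2) := by rw [sqrt_two_eps ε hε]; ring
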